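/- Let F > 0, A > 0, h_ref > 0, ω > 0, and ζ > 0 be constants. Define the transmission delay as a function of the exploration distance x ≥ 0 by t(x) = F / log₂(1 + A·(h_ref + ω·(1 − e^{−x/ζ}))). Then t is strictly convex on [0, ∞). -/

import Mathlib

open Real Set

/-- The transmission delay `t(x) = F / log₂(1 + A·(h_ref + ω·(1 − e^{−x/ζ})))`
is strictly convex on `[0, ∞)`. -/
theorem transmission_delay_strictConvexOn
    (F A href ω ζ : ℝ) (hF : 0 < F) (hA : 0 < A) (hh : 0 < href)
    (hω : 0 < ω) (hζ : 0 < ζ) :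
    StrictConvexOn ℝ (Set.Ici (0 : ℝ))
      (fun x => F / Real.logb 2 (1 + A * (href + ω * (1 - Real.exp (-x / ζ))))) := by
  set g : ℝ → ℝ := fun x => 1 + A * (href + ω * (1 - Real.exp (-x / ζ))) with hgdef
  -- g x > 1 for x ≥ 0
  have hg1 : ∀ x : ℝ, x ∈ Set.Ici (0:ℝ) → 1 < g x := by
    intro x hx
    have hx0 : (0:ℝ) ≤ x := hx
    have hexp : Real.exp (-x / ζ) ≤ 1 := by
      rw [Real.exp_le_one_iff]
      exact div_nonpos_of_nonpos_of_nonneg (by linarith) hζ.le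
    have : 0 ≤ ω * (1 - Real.exp (-x / ζ)) := by nlinarith
    simp only [hgdef]
    nlinarith
  have hL : ∀ x : ℝ, x ∈ Set.Ici (0:ℝ) → 0 < Real.logb 2 (g x) := fun x hx =>
    Real.logb_pos one_lt_two (hg1 x hx)
  constructor
  · exact convex_Ici 0
  intro x hx y hy hxy a b ha hb hab
  simp only [smul_eq_mul]
  have hz : a * x + b * y ∈ Set.Ici (0:ℝ) := by
    have hx0 : (0:ℝ) ≤ x := hx
    have hy0 : (0:ℝ) ≤ y := hy
    have : 0 ≤ a * x + b * y := by positivity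
    exact this
  -- strict convexity of exp gives exp(-(ax+by)/ζ) < a exp(-x/ζ) + b exp(-y/ζ)
  have hne : -x / ζ ≠ -y / ζ := by
    intro h
    field_simp at h
    exact hxy (by linarith)
  have hexp := strictConvexOn_exp.2 (Set.mem_univ (-x / ζ)) (Set.mem_univ (-y / ζ)) hne ha hb hab
  simp only [smul_eq_mul] at hexp
  have harg : a * (-x / ζ) + b * (-y / ζ) = -(a * x + b * y) / ζ := by ring
  rw [harg] at hexp
  -- hence g(ax+by) > a * g x + b * g y
  have hgz : a * g x + b * g y < g (a * x + b * y) := by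
    have key : A * ω * Real.exp (-(a * x + b * y) / ζ)
        < A * ω * (a * Real.exp (-x / ζ) + b * Real.exp (-y / ζ)) :=
      mul_lt_mul_of_pos_left hexp (mul_pos hA hω)
    have e1 : a * g x + b * g y = (1 + A * href + A * ω)
        - A * ω * (a * Real.exp (-x / ζ) + b * Real.exp (-y / ζ)) := by
      simp only [hgdef]
      linear_combination (1 + A * href + A * ω) * hab
    have e2 : g (a * x + b * y) = (1 + A * href + A * ω)
        - A * ω * Real.exp (-(a * x + b * y) / ζ) := by
      simp only [hgdef]; ring
    rw [e1, e2]
    linarith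
  have hgxpos : (0:ℝ) < g x := lt_trans one_pos (hg1 x hx)
  have hgypos : (0:ℝ) < g y := lt_trans one_pos (hg1 y hy)
  have hcombo_pos : (0:ℝ) < a * g x + b * g y := by positivity
  -- logb 2 is strictly monotone
  have hlog1 : Real.logb 2 (a * g x + b * g y) < Real.logb 2 (g (a * x + b * y)) :=
    Real.logb_lt_logb one_lt_two hcombo_pos hgz
  -- concavity of log: a logb gx + b logb gy ≤ logb (a gx + b gy)
  have hlog2 : a * Real.logb 2 (g x) + b * Real.logb 2 (g y)
      ≤ Real.logb 2 (a * g x + b * g y) := by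
    have hconc := (strictConcaveOn_log_Ioi.concaveOn).2 (Set.mem_Ioi.mpr hgxpos)
      (Set.mem_Ioi.mpr hgypos) ha.le hb.le hab
    simp only [smul_eq_mul] at hconc
    have hlog2pos : (0:ℝ) < Real.log 2 := Real.log_pos one_lt_two
    simp only [Real.logb]
    calc a * (Real.log (g x) / Real.log 2) + b * (Real.log (g y) / Real.log 2)
        = (a * Real.log (g x) + b * Real.log (g y)) / Real.log 2 := by ring
      _ ≤ Real.log (a * g x + b * g y) / Real.log 2 := by gcongr
  set U := Real.logb 2 (g x) with hU
  set V := Real.logb 2 (g y) with hV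
  have hUpos : 0 < U := hL x hx
  have hVpos : 0 < V := hL y hy
  have hUVpos : 0 < a * U + b * V := by positivity
  have hmid : a * U + b * V < Real.logb 2 (g (a * x + b * y)) :=
    lt_of_le_of_lt hlog2 hlog1
  -- step: F / logb(g z) < F / (aU + bV)
  have h1 : F / Real.logb 2 (g (a * x + b * y)) < F / (a * U + b * V) :=
    div_lt_div_of_pos_left hF hUVpos hmid
  -- step: F / (aU+bV) ≤ a (F/U) + b (F/V)
  have h2 : F / (a * U + b * V) ≤ a * (F / U) + b * (F / V) := by
    have e : a * (F / U) + b * (F / V) = (a * F * V + b * F * U) / (U * V) := by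
      field_simp
    rw [e, div_le_div_iff₀ hUVpos (by positivity)]
    have id2 : (a * F * V + b * F * U) * (a * U + b * V) - F * (U * V)
        = F * (a * b) * (U - V) ^ 2 := by
      linear_combination F * U * V * (a + b + 1) * hab
    nlinarith [id2, mul_nonneg (mul_nonneg hF.le (mul_pos ha hb).le) (sq_nonneg (U - V))]
  exact lt_of_lt_of_le h1 h2
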